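/- Let N ≥ 2 and N/2 < K < N be integers, and fix η₀ ∈ ℰ_{N,K} and t ≥ 0. Let μ₀ be the probability vector (1/K) Σ_{k ∈ ℤ/Kℤ} δ_{(x_k(η₀) mod N, η₀)} on S, and μ_t = μ₀ · exp(t Q^{tag}). Then the pushforward of μ_t under the map (x,η) ↦ (r(x,η), η) is the product of the uniform measure on ℤ/Kℤ with δ_{η₀} · exp(t Q^ℰ); that is, for every k ∈ ℤ/Kℤ and every η ∈ ℰ_{N,K}, μ_t((x_k(η) mod N, η)) = (1/K) · (δ_{η₀} exp(t Q^ℰ))(η). -/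

import Mathlib

open scoped Classical BigOperators
set_option linter.unusedSectionVars false
set_option linter.unusedTactic false
set_option linter.unusedVariables false

noncomputable section

/-- A particle configuration on the discrete circle `ℤ/Mℤ`. -/
abbrev Conf (M : ℕ) := ZMod M → Bool

/-- Number of occupied sites (particles) of a configuration. -/
def numParticles {M : ℕ} [NeZero M] (η : Conf M) : ℕ :=
  (Finset.univ.filter fun x => η x = true).card

/-- Ergodicity: every pair of neighbouring sites carries at least one particle. -/
def isErgodic {M : ℕ} (η : Conf M) : Prop :=
  ∀ x : ZMod M, η x = true ∨ η (x + 1) = true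

/-- The configuration `η` with the values at `x` and `y` exchanged. -/
def swapConf {α : Type*} [DecidableEq α] (η : α → Bool) (x y : α) : α → Bool :=
  fun z => if z = x then η y else if z = y then η x else η z

/-- The representative of `k ∈ ℤ/Kℤ` in `{1, …, K}`. -/
def repOne {K : ℕ} [NeZero K] (k : ZMod K) : ℕ :=
  if k.val = 0 then K else k.val

/-- `Σ_{y=1}^{x} η_y`, the number of particles among sites `1, …, x`. -/
def countUpTo {N : ℕ} (η : Conf N) (x : ℕ) : ℕ :=
  ∑ y ∈ Finset.Icc 1 x, (if η ((y : ℕ) : ZMod N) = true then 1 else 0)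

/-- `x_k(η) ∈ {1, …, N}`: the position of the `k`-th particle of `η`. -/
def pos {N K : ℕ} [NeZero K] (η : Conf N) (k : ZMod K) : ℕ :=
  sInf {x : ℕ | 1 ≤ x ∧ x ≤ N ∧ countUpTo η x = repOne k}

/-- The clockwise distance `d(a,b) ∈ {1, …, M}` from `a` to `b` on `ℤ/Mℤ`. -/
def cdist {M : ℕ} [NeZero M] (a b : ZMod M) : ℕ :=
  if (b - a).val = 0 then M else (b - a).val

/-- The (integer) value `σ^{(k,η)}_l = 2 − d(x_{k+l−1}(η), x_{k+l}(η))`. -/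
def sigmaVal {N K : ℕ} [NeZero N] [NeZero K] (η : Conf N) (k l : ZMod K) : ℤ :=
  2 - (cdist ((pos η (k + l - 1) : ℕ) : ZMod N) ((pos η (k + l) : ℕ) : ZMod N) : ℤ)

/-- The SSEP configuration `σ^{(k,η)}`, occupied at `l` iff `σ^{(k,η)}_l = 1`. -/
def sigmaConf {N K : ℕ} [NeZero N] [NeZero K] (η : Conf N) (k : ZMod K) : Conf K :=
  fun l => decide (cdist ((pos η (k + l - 1) : ℕ) : ZMod N) ((pos η (k + l) : ℕ) : ZMod N) = 1)

/-- Number of pairs `(x, z)`, `z ∈ {−1, +1}`, with `η_{x−z} = η_x = 1`, `η_{x+z} = 0` and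
`η^{x,x+z} = η'`. -/
def jumpCount {N : ℕ} [NeZero N] (η η' : Conf N) : ℕ :=
  (Finset.univ.filter fun p : ZMod N × Bool =>
    η (p.1 - (if p.2 then 1 else -1)) = true ∧ η p.1 = true
      ∧ η (p.1 + (if p.2 then 1 else -1)) = false
      ∧ swapConf η p.1 (p.1 + (if p.2 then 1 else -1)) = η').card

/-- The ergodic component `ℰ_{N,K}`, as a type. -/
abbrev ErgoT (N K : ℕ) [NeZero N] := {η : Conf N // numParticles η = K ∧ isErgodic η}

/-- The FEP generator restricted to the ergodic component. -/
def genErgo (N K : ℕ) [NeZero N] : Matrix (ErgoT N K) (ErgoT N K) ℝ :=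
  fun η η' =>
    if η' = η then -(∑ η'' ∈ Finset.univ.filter (fun η'' => η'' ≠ η), (jumpCount η.1 η''.1 : ℝ))
    else (jumpCount η.1 η'.1 : ℝ)

/-- The state space of the tagged-particle FEP: an ergodic configuration together with an
occupied (tagged) site. -/
abbrev TagT (N K : ℕ) [NeZero N] :=
  {p : ZMod N × Conf N // (numParticles p.2 = K ∧ isErgodic p.2) ∧ p.2 p.1 = true}

/-- Number of labelled transitions `(y, z)` leading from the tagged state `p` to the
tagged state `q`:  a particle at `y` with a neighbour at `y − z` jumps to the empty site
`y + z`; if `y` is the tagged site, the tag moves along. -/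
def tagCount {N : ℕ} [NeZero N] (p q : ZMod N × Conf N) : ℕ :=
  (Finset.univ.filter fun yz : ZMod N × Bool =>
    p.2 yz.1 = true ∧ p.2 (yz.1 - (if yz.2 then 1 else -1)) = true
      ∧ p.2 (yz.1 + (if yz.2 then 1 else -1)) = false
      ∧ q = ((if yz.1 = p.1 then p.1 + (if yz.2 then 1 else -1) else p.1),
             swapConf p.2 yz.1 (yz.1 + (if yz.2 then 1 else -1)))).card

/-- The generator of the tagged-particle FEP, as a matrix on `TagT N K`. -/
def genTag (N K : ℕ) [NeZero N] : Matrix (TagT N K) (TagT N K) ℝ :=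
  fun p q =>
    if q = p then -(∑ r ∈ Finset.univ.filter (fun r => r ≠ p), (tagCount p.1 r.1 : ℝ))
    else (tagCount p.1 q.1 : ℝ)

-- B part
section Bpart

variable {N : ℕ} [NeZero N]

/-- next occupied site (for ergodic configurations). -/
def nxt (η : Conf N) (x : ZMod N) : ZMod N := if η (x + 1) = true then x + 1 else x + 2

def prv (η : Conf N) (x : ZMod N) : ZMod N := if η (x - 1) = true then x - 1 else x - 2

lemma natCast_zmod_ne_zero {a : ℕ} (h1 : 1 ≤ a) (h2 : a < N) : (a : ZMod N) ≠ 0 := by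
  intro h
  rw [ZMod.natCast_eq_zero_iff] at h
  exact absurd (Nat.le_of_dvd (by omega) h) (by omega)

lemma zmodone_ne_zero (hN : 3 ≤ N) : (1 : ZMod N) ≠ 0 := by
  have := natCast_zmod_ne_zero (N := N) (a := 1) le_rfl (by omega); simpa using this

lemma zmodtwo_ne_zero (hN : 3 ≤ N) : (2 : ZMod N) ≠ 0 := by
  have := natCast_zmod_ne_zero (N := N) (a := 2) (by omega) (by omega); simpa using this

lemma zmodtwo_ne_one (hN : 3 ≤ N) : (2 : ZMod N) ≠ 1 := by
  intro h
  have : (1 : ZMod N) = 0 := by linear_combination h -- 2 - 1 = 1 - 0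
  exact zmodone_ne_zero hN this

lemma nxt_occ {η : Conf N} (hE : isErgodic η) (x : ZMod N) : η (nxt η x) = true := by
  unfold nxt
  rcases hE (x + 1) with h | h
  · simp [h]
  · by_cases h1 : η (x + 1) = true
    · simp [h1]
    · simpa [h1, add_assoc, one_add_one_eq_two] using h

lemma prv_nxt {η : Conf N} {x : ZMod N} (hx : η x = true) : prv η (nxt η x) = x := by
  unfold nxt prv
  by_cases h1 : η (x + 1) = true
  · simp [h1, hx]
  · have e2 : x + 2 - 1 = x + 1 := by ring
    have e3 : x + 2 - 2 = x := by ring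
    simp [h1, e2, e3]

lemma nxt_inj {η : Conf N} {x y : ZMod N} (hx : η x = true) (hy : η y = true)
    (h : nxt η x = nxt η y) : x = y := by
  have := prv_nxt hx
  rw [h, prv_nxt hy] at this
  exact this.symm

end Bpart
section B4

variable {N : ℕ} [NeZero N]

lemma swap_eval (η : Conf N) (y w v : ZMod N) :
    swapConf η y w v = if v = y then η w else if v = w then η y else η v := rfl

lemma key_occ {η : Conf N} {x y z : ZMod N} (hx : η x = true) (h2 : η y = true)
    (h3 : η (y + z) = false) :
    swapConf η y (y + z) (if y = x then x + z else x) = true := by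
  by_cases hyx : y = x
  · subst hyx
    have hne : y + z ≠ y := by intro h; rw [h, h2] at h3; exact absurd h3 (by simp)
    rw [if_pos rfl, swap_eval, if_neg hne, if_pos rfl]; exact h2
  · have hne1 : x ≠ y := fun h => hyx h.symm
    have hne2 : x ≠ y + z := by intro h; rw [← h, hx] at h3; exact absurd h3 (by simp)
    rw [if_neg hyx, swap_eval, if_neg hne1, if_neg hne2]; exact hx

lemma key_comm {η : Conf N} (hN : 3 ≤ N) (hE : isErgodic η) {x y z : ZMod N}
    (hz : z = 1 ∨ z = -1) (hx : η x = true) (h1 : η (y - z) = true) (h2 : η y = true)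
    (h3 : η (y + z) = false) :
    nxt (swapConf η y (y + z)) (if y = x then x + z else x)
      = if y = nxt η x then nxt η x + z else nxt η x := by
  have bfalse : ∀ b : Bool, b = false → b ≠ true := by intro b hb; simp [hb]
  by_cases hyx : y = x
  · subst hyx
    rw [if_pos rfl]
    rcases hz with rfl | rfl
    · -- tagged jumps right
      have hb : η (y + 1) = false := h3
      have hn : nxt η y = y + 2 := by unfold nxt; rw [hb]; simp
      have hocc2 : η (y + 2) = true := by
        rcases hE (y + 1) with h | h
        · exact absurd h (bfalse _ hb)
        · rw [show y + 1 + 1 = y + 2 by ring] at h; exact h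
      rw [hn, if_neg (show y ≠ y + 2 by intro h; exact zmodtwo_ne_zero hN (by linear_combination -h))]
      have e1 : swapConf η y (y + 1) (y + 1 + 1) = true := by
        rw [swap_eval, if_neg (show y + 1 + 1 ≠ y by
              intro h; exact zmodtwo_ne_zero hN (by linear_combination h)),
            if_neg (show y + 1 + 1 ≠ y + 1 by
              intro h; exact zmodone_ne_zero hN (by linear_combination h))]
        rw [show y + 1 + 1 = y + 2 by ring]; exact hocc2
      unfold nxt; rw [e1]; simp; ring
    · -- tagged jumps left
      have hn : nxt η y = y + 1 := by
        unfold nxt; rw [show y + 1 = y - (-1) by ring, h1]; simp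
      rw [hn, if_neg (show y ≠ y + 1 by intro h; exact zmodone_ne_zero hN (by linear_combination -h))]
      have e1 : swapConf η y (y + -1) (y + -1 + 1) = false := by
        rw [show y + -1 + 1 = y by ring, swap_eval, if_pos rfl]; exact h3
      unfold nxt; rw [e1]; simp; ring
  · -- another particle jumps
    rw [if_neg hyx]
    by_cases hb : η (x + 1) = true
    · have hn : nxt η x = x + 1 := by unfold nxt; rw [hb]; simp
      by_cases hyn : y = x + 1
      · subst hyn
        rcases hz with rfl | rfl
        · -- next particle jumps away
          rw [hn, if_pos rfl]
          have e1 : swapConf η (x + 1) (x + 1 + 1) (x + 1) = false := by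
            rw [swap_eval, if_pos rfl]; exact h3
          unfold nxt; rw [e1]; simp; ring
        · -- next particle jumps onto tag: impossible
          rw [show x + 1 + -1 = x by ring] at h3
          exact absurd hx (bfalse _ h3)
      · rw [hn, if_neg hyn]
        have e1 : swapConf η y (y + z) (x + 1) = true := by
          have hc2 : x + 1 ≠ y + z := by intro h; rw [← h, hb] at h3; exact absurd h3 (by simp)
          rw [swap_eval, if_neg (show x + 1 ≠ y from fun h => hyn h.symm), if_neg hc2]
          exact hb
        unfold nxt; rw [e1]; simp
    · have hbf : η (x + 1) = false := by
        cases hh : η (x + 1); rfl; exact absurd hh hb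
      have hn : nxt η x = x + 2 := by unfold nxt; rw [hbf]; simp
      by_cases hyn : y = x + 2
      · subst hyn
        rcases hz with rfl | rfl
        · rw [show x + 2 - 1 = x + 1 by ring] at h1
          exact absurd h1 (bfalse _ hbf)
        · rw [hn, if_pos rfl]
          have e1 : swapConf η (x + 2) (x + 2 + -1) (x + 1) = true := by
            rw [swap_eval, if_neg (show x + 1 ≠ x + 2 by
                  intro h; exact zmodtwo_ne_one hN (by linear_combination -h)),
                if_pos (show x + 1 = x + 2 + -1 by ring)]
            exact h2
          unfold nxt; rw [e1]; simp; ring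
      · rw [hn, if_neg hyn]
        have e1 : swapConf η y (y + z) (x + 1) = false := by
          have hc1 : x + 1 ≠ y := by intro h; rw [h, h2] at hbf; exact absurd hbf (by simp)
          have hc2 : x + 1 ≠ y + z := by
            intro h
            rcases hz with rfl | rfl
            · exact hyx (show y = x by linear_combination -h)
            · exact hyn (show y = x + 2 by linear_combination -h)
          rw [swap_eval, if_neg hc1, if_neg hc2]
          exact hbf
        unfold nxt; rw [e1]; simp
end B4
section Cpart

variable {N : ℕ} [NeZero N]

lemma countUpTo_zero (η : Conf N) : countUpTo η 0 = 0 := by simp [countUpTo]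

lemma countUpTo_succ (η : Conf N) (x : ℕ) :
    countUpTo η (x + 1) = countUpTo η x + (if η ((x + 1 : ℕ) : ZMod N) = true then 1 else 0) := by
  unfold countUpTo
  rw [← Finset.sum_Icc_succ_top (by omega : 1 ≤ x + 1)]

lemma countUpTo_mono (η : Conf N) : Monotone (countUpTo η) := by
  intro a b hab
  unfold countUpTo
  exact Finset.sum_le_sum_of_subset (Finset.Icc_subset_Icc le_rfl hab)

lemma countUpTo_total (η : Conf N) : countUpTo η N = numParticles η := by
  unfold countUpTo numParticles
  rw [Finset.card_filter]
  refine Finset.sum_nbij' (fun y => ((y : ℕ) : ZMod N)) (fun x => if x.val = 0 then N else x.val)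
    ?_ ?_ ?_ ?_ ?_
  · intro a _; exact Finset.mem_univ _
  · intro x _
    have hv : x.val < N := ZMod.val_lt x
    by_cases h : x.val = 0
    · rw [if_pos h, Finset.mem_Icc]; exact ⟨NeZero.one_le, le_rfl⟩
    · rw [if_neg h, Finset.mem_Icc]; omega
  · intro a ha
    rw [Finset.mem_Icc] at ha
    have : ((a : ℕ) : ZMod N).val = a % N := ZMod.val_natCast N a
    by_cases h : a = N
    · subst h; simp [this, Nat.mod_self]
    · have : ((a : ℕ) : ZMod N).val = a := by rw [this, Nat.mod_eq_of_lt (by omega)]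
      simp [this]; omega
  · intro x _
    by_cases h : x.val = 0
    · rw [if_pos h, ZMod.natCast_self]
      exact ((ZMod.val_eq_zero x).mp h).symm
    · rw [if_neg h, ZMod.natCast_val, ZMod.cast_id]
  · intro a _; rfl

lemma exists_countUpTo_eq (η : Conf N) {m n : ℕ} (h : m ≤ countUpTo η n) :
    ∃ x, x ≤ n ∧ countUpTo η x = m := by
  induction n with
  | zero => exact ⟨0, le_rfl, by rw [countUpTo_zero] at h ⊢; omega⟩
  | succ n ih =>
    by_cases h' : m ≤ countUpTo η n
    · obtain ⟨x, hx1, hx2⟩ := ih h'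
      exact ⟨x, by omega, hx2⟩
    · refine ⟨n + 1, le_rfl, ?_⟩
      have := countUpTo_succ η n
      by_cases hb : η ((n + 1 : ℕ) : ZMod N) = true
      · rw [if_pos hb] at this; omega
      · rw [if_neg hb] at this; omega

/-- the set in the definition of `pos` is nonempty -/
lemma posSet_nonempty (η : Conf N) {m : ℕ} (hm1 : 1 ≤ m) (hm2 : m ≤ numParticles η) :
    {x : ℕ | 1 ≤ x ∧ x ≤ N ∧ countUpTo η x = m}.Nonempty := by
  obtain ⟨x, hx1, hx2⟩ := exists_countUpTo_eq η (m := m) (n := N)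
    (show m ≤ countUpTo η N by rw [countUpTo_total]; exact hm2)
  refine ⟨x, ?_, hx1, hx2⟩
  rcases Nat.eq_zero_or_pos x with rfl | h
  · rw [countUpTo_zero] at hx2; omega
  · omega

variable {K : ℕ} [NeZero K]

lemma repOne_ge_one (k : ZMod K) : 1 ≤ repOne k := by
  unfold repOne; split
  · exact NeZero.one_le
  · omega

lemma repOne_le (k : ZMod K) : repOne k ≤ K := by
  unfold repOne; split
  · exact le_rfl
  · exact le_of_lt (ZMod.val_lt k)

lemma pos_spec (η : Conf N) (k : ZMod K) (hnum : numParticles η = K) :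
    1 ≤ pos η k ∧ pos η k ≤ N ∧ countUpTo η (pos η k) = repOne k :=
  Nat.sInf_mem (posSet_nonempty η (repOne_ge_one k) (by rw [hnum]; exact repOne_le k))

lemma pos_min (η : Conf N) (k : ZMod K) {x : ℕ} (h1 : 1 ≤ x) (h2 : x ≤ N)
    (h3 : countUpTo η x = repOne k) : pos η k ≤ x :=
  Nat.sInf_le ⟨h1, h2, h3⟩

/-- generic: value and minimality determine `sInf` -/
lemma pos_eq (η : Conf N) (k : ZMod K) {x : ℕ} (h1 : 1 ≤ x) (h2 : x ≤ N)
    (h3 : countUpTo η x = repOne k)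
    (hmin : ∀ x', 1 ≤ x' → countUpTo η x' = repOne k → x ≤ x') : pos η k = x := by
  have hle := pos_min η k h1 h2 h3
  have hne : {x : ℕ | 1 ≤ x ∧ x ≤ N ∧ countUpTo η x = repOne k}.Nonempty := ⟨x, h1, h2, h3⟩
  have hmem : 1 ≤ pos η k ∧ pos η k ≤ N ∧ countUpTo η (pos η k) = repOne k :=
    Nat.sInf_mem hne
  have := hmin _ hmem.1 hmem.2.2
  omega

lemma pos_occ (η : Conf N) (k : ZMod K) (hnum : numParticles η = K) :
    η ((pos η k : ℕ) : ZMod N) = true := by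
  obtain ⟨h1, h2, h3⟩ := pos_spec η k hnum
  by_contra hocc
  -- then countUpTo (pos-1) = repOne k as well
  obtain ⟨p, hp⟩ : ∃ p, pos η k = p + 1 := ⟨pos η k - 1, by omega⟩
  have hstep := countUpTo_succ η p
  rw [← hp, h3] at hstep
  rw [if_neg hocc, Nat.add_zero] at hstep
  -- hstep : countUpTo η p = repOne k (as repOne k = countUpTo p + 0)
  have hp1 : 1 ≤ p := by
    rcases Nat.eq_zero_or_pos p with rfl | h
    · rw [countUpTo_zero] at hstep; have := repOne_ge_one k; omega
    · omega
  have := pos_min η k hp1 (by omega) hstep.symm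
  omega

lemma pos_strict_mono (η : Conf N) (k k' : ZMod K) (hnum : numParticles η = K)
    (h : repOne k < repOne k') : pos η k < pos η k' := by
  obtain ⟨_, _, h3⟩ := pos_spec η k hnum
  obtain ⟨_, _, h3'⟩ := pos_spec η k' hnum
  by_contra hc
  have := countUpTo_mono η (show pos η k' ≤ pos η k by omega)
  omega

lemma repOne_inj {k k' : ZMod K} (h : repOne k = repOne k') : k = k' := by
  unfold repOne at h
  by_cases h1 : k.val = 0 <;> by_cases h2 : k'.val = 0
  · rw [(ZMod.val_eq_zero k).mp h1, (ZMod.val_eq_zero k').mp h2]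
  · rw [if_pos h1, if_neg h2] at h; have := ZMod.val_lt k'; omega
  · rw [if_neg h1, if_pos h2] at h; have := ZMod.val_lt k; omega
  · rw [if_neg h1, if_neg h2] at h; exact ZMod.val_injective _ h

lemma natCast_inj_Icc {a b : ℕ} (ha1 : 1 ≤ a) (ha2 : a ≤ N) (hb1 : 1 ≤ b) (hb2 : b ≤ N)
    (h : ((a : ℕ) : ZMod N) = ((b : ℕ) : ZMod N)) : a = b := by
  rw [ZMod.natCast_eq_natCast_iff] at h
  have h2 := Nat.ModEq.dvd h
  obtain ⟨c, hc⟩ := h2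
  have hb : (b : ℤ) - a = N * c := by omega
  have hN0 : 0 < (N : ℤ) := by exact_mod_cast Nat.pos_of_ne_zero (NeZero.ne N)
  have hcz : c = 0 := by
    rcases lt_trichotomy c 0 with h' | h' | h'
    · exfalso
      have hm : (N : ℤ) * c ≤ N * (-1) := by
        apply mul_le_mul_of_nonneg_left (by omega) (by omega)
      rw [mul_neg_one] at hm
      omega
    · exact h'
    · exfalso
      have hm : (N : ℤ) * 1 ≤ N * c := by
        apply mul_le_mul_of_nonneg_left (by omega) (by omega)
      rw [mul_one] at hm
      omega
  rw [hcz, mul_zero] at hb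
  omega

lemma pos_cast_inj (η : Conf N) {k k' : ZMod K} (hnum : numParticles η = K)
    (h : ((pos η k : ℕ) : ZMod N) = ((pos η k' : ℕ) : ZMod N)) : k = k' := by
  obtain ⟨a1, a2, _⟩ := pos_spec η k hnum
  obtain ⟨b1, b2, _⟩ := pos_spec η k' hnum
  have := natCast_inj_Icc a1 a2 b1 b2 h
  by_contra hc
  rcases Nat.lt_or_ge (repOne k) (repOne k') with h' | h'
  · have := pos_strict_mono η k k' hnum h'; omega
  · rcases Nat.eq_or_lt_of_le h' with h'' | h''
    · exact hc (repOne_inj h''.symm)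
    · have := pos_strict_mono η k' k hnum h''; omega

lemma pos_surj (η : Conf N) (hnum : numParticles η = K) {x : ZMod N} (hx : η x = true) :
    ∃ k : ZMod K, ((pos η k : ℕ) : ZMod N) = x := by
  set r : ℕ := if x.val = 0 then N else x.val with hr
  have hr1 : 1 ≤ r ∧ r ≤ N := by
    rw [hr]; have := ZMod.val_lt x; split <;> constructor <;> omega
  have hrx : ((r : ℕ) : ZMod N) = x := by
    rw [hr]; split
    · next h => rw [(ZMod.val_eq_zero x).mp h]; exact ZMod.natCast_self N
    · rw [ZMod.natCast_val, ZMod.cast_id]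
  set m := countUpTo η r with hm
  obtain ⟨p, hp⟩ : ∃ p, r = p + 1 := ⟨r - 1, by omega⟩
  have hstep := countUpTo_succ η p
  rw [← hp, hrx, hx] at hstep
  simp at hstep
  have hm1 : 1 ≤ m := by rw [hm, hstep]; omega
  have hm2 : m ≤ K := by
    rw [hm, ← hnum, ← countUpTo_total]
    exact countUpTo_mono η hr1.2
  have hrep : repOne ((m : ℕ) : ZMod K) = m := by
    unfold repOne
    rcases Nat.eq_or_lt_of_le hm2 with h' | h'
    · rw [h']; simp [ZMod.natCast_self]
    · rw [ZMod.val_natCast, Nat.mod_eq_of_lt h', if_neg (by omega)]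
  refine ⟨((m : ℕ) : ZMod K), ?_⟩
  have : pos η ((m : ℕ) : ZMod K) = r := by
    apply pos_eq η _ hr1.1 hr1.2 (by rw [hrep, hm])
    intro x' hx1 hx2
    rw [hrep] at hx2
    by_contra hcc
    have hx'p : x' ≤ p := by omega
    have := countUpTo_mono η hx'p
    omega
  rw [this, hrx]

end Cpart
section C4

variable {N K : ℕ} [NeZero N] [NeZero K]

lemma bool_false {b : Bool} (h : ¬ b = true) : b = false := by
  cases b
  · rfl
  · exact absurd rfl h

lemma repOne_succ_lt (hK : 2 ≤ K) {k : ZMod K} (h : repOne k < K) :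
    repOne (k + 1) = repOne k + 1 := by
  have hv : k.val ≠ 0 := by
    intro h0; unfold repOne at h; rw [if_pos h0] at h; omega
  have hrk : repOne k = k.val := by unfold repOne; rw [if_neg hv]
  have hvlt : k.val < K := ZMod.val_lt k
  haveI : Fact (1 < K) := ⟨hK⟩
  have hadd : (k + 1).val = (k.val + 1) % K := by
    rw [ZMod.val_add, ZMod.val_one]
  rcases Nat.lt_or_ge (k.val + 1) K with h' | h'
  · have : (k + 1).val = k.val + 1 := by rw [hadd, Nat.mod_eq_of_lt h']
    unfold repOne; rw [this, if_neg (by omega), if_neg hv]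
  · have hKeq : k.val + 1 = K := by omega
    have : (k + 1).val = 0 := by rw [hadd, hKeq, Nat.mod_self]
    unfold repOne; rw [this, if_pos rfl, if_neg hv]; omega

lemma repOne_succ_top (hK : 2 ≤ K) {k : ZMod K} (h : repOne k = K) :
    repOne (k + 1) = 1 := by
  have hv : k.val = 0 := by
    by_contra hv; unfold repOne at h; rw [if_neg hv] at h
    have := ZMod.val_lt k; omega
  haveI : Fact (1 < K) := ⟨hK⟩
  have hadd : (k + 1).val = 1 := by
    rw [ZMod.val_add, ZMod.val_one, hv]
    simpa using Nat.mod_eq_of_lt (by omega)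
  unfold repOne; rw [hadd, if_neg (by omega)]

lemma count_lt_pos (η : Conf N) (k : ZMod K) (hnum : numParticles η = K) {x : ℕ}
    (hx : x < pos η k) : countUpTo η x < repOne k := by
  obtain ⟨hP1, hP2, hP3⟩ := pos_spec η k hnum
  by_contra h
  push_neg at h
  obtain ⟨x', hx'1, hx'2⟩ := exists_countUpTo_eq η h
  have h1 : 1 ≤ x' := by
    rcases Nat.eq_zero_or_pos x' with rfl | h'
    · rw [countUpTo_zero] at hx'2; have := repOne_ge_one k; omega
    · omega
  have := pos_min η k h1 (by omega) hx'2
  omega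

lemma empty_above (η : Conf N) (hnum : numParticles η = K)
    {P x : ℕ} (hP : countUpTo η P = K) (h1 : P < x) (h2 : x ≤ N) :
    η ((x : ℕ) : ZMod N) = false := by
  obtain ⟨p, rfl⟩ : ∃ p, x = p + 1 := ⟨x - 1, by omega⟩
  have hstep := countUpTo_succ η p
  have c1 : K ≤ countUpTo η p := hP ▸ countUpTo_mono η (by omega)
  have c2 : countUpTo η (p + 1) ≤ K := by
    rw [← hnum, ← countUpTo_total]; exact countUpTo_mono η h2
  by_cases hb : η ((p + 1 : ℕ) : ZMod N) = true
  · rw [if_pos hb] at hstep; omega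
  · exact bool_false hb

lemma pos_nxt (hN : 3 ≤ N) (hK : 2 ≤ K) (η : Conf N)
    (hnum : numParticles η = K) (hE : isErgodic η) (k : ZMod K) :
    ((pos η (k + 1) : ℕ) : ZMod N) = nxt η ((pos η k : ℕ) : ZMod N) := by
  obtain ⟨hP1, hP2, hP3⟩ := pos_spec η k hnum
  have hocc : η ((pos η k : ℕ) : ZMod N) = true := pos_occ η k hnum
  set P := pos η k with hPdef
  set m := repOne k with hmdef
  have htot : countUpTo η N = K := by rw [countUpTo_total, hnum]
  by_cases hm : m < K
  · -- below the top rank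
    have hrep1 : repOne (k + 1) = m + 1 := repOne_succ_lt hK hm
    have hPN : P < N := by
      rcases Nat.eq_or_lt_of_le hP2 with h' | h'
      · rw [h'] at hP3; omega
      · exact h'
    have hcast1 : ((P + 1 : ℕ) : ZMod N) = (P : ZMod N) + 1 := by push_cast; ring
    have hcast2 : ((P + 2 : ℕ) : ZMod N) = (P : ZMod N) + 2 := by push_cast; ring
    by_cases hb : η ((P + 1 : ℕ) : ZMod N) = true
    · have hposeq : pos η (k + 1) = P + 1 := by
        apply pos_eq η (k + 1) (by omega) (by omega)
        · rw [hrep1, countUpTo_succ, if_pos hb, hP3]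
        · intro x' h1' h2'
          rw [hrep1] at h2'
          by_contra hc
          have : countUpTo η x' ≤ m := hP3 ▸ countUpTo_mono η (by omega)
          omega
      rw [hposeq, hcast1]
      unfold nxt
      rw [← hcast1, hb, if_pos rfl, hcast1]
    · have hbf : η ((P + 1 : ℕ) : ZMod N) = false := bool_false hb
      have hcount1 : countUpTo η (P + 1) = m := by
        rw [countUpTo_succ, if_neg hb, hP3, Nat.add_zero]
      have hP1N : P + 1 < N := by
        rcases Nat.eq_or_lt_of_le (show P + 1 ≤ N by omega) with h' | h'
        · rw [h'] at hcount1; omega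
        · exact h'
      have h2occ : η ((P + 2 : ℕ) : ZMod N) = true := by
        rcases hE ((P : ZMod N) + 1) with h' | h'
        · rw [← hcast1] at h'; rw [h'] at hbf; exact absurd hbf (by simp)
        · rw [show (P : ZMod N) + 1 + 1 = (P : ZMod N) + 2 by ring, ← hcast2] at h'
          exact h'
      have hposeq : pos η (k + 1) = P + 2 := by
        apply pos_eq η (k + 1) (by omega) (by omega)
        · rw [hrep1, show P + 2 = (P + 1) + 1 by ring, countUpTo_succ,
            if_pos (by rw [show P + 1 + 1 = P + 2 by ring]; exact h2occ), hcount1]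
        · intro x' h1' h2'
          rw [hrep1] at h2'
          by_contra hc
          have : countUpTo η x' ≤ m := hcount1 ▸ countUpTo_mono η (by omega)
          omega
      rw [hposeq, hcast2]
      unfold nxt
      rw [← hcast1, hbf]
      simp [hcast2]
  · -- top rank
    have hmK : m = K := by have := repOne_le k; omega
    have hrep1 : repOne (k + 1) = 1 := repOne_succ_top hK (by omega)
    have hPtop : countUpTo η P = K := by omega
    have hone : ((1 : ℕ) : ZMod N) = (1 : ZMod N) := by push_cast; ring
    have htwo : ((2 : ℕ) : ZMod N) = (2 : ZMod N) := by push_cast; ring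
    have hcount1 : countUpTo η 1 = if η ((1 : ℕ) : ZMod N) = true then 1 else 0 := by
      have h01 : countUpTo η 1
          = countUpTo η 0 + (if η ((1 : ℕ) : ZMod N) = true then 1 else 0) :=
        countUpTo_succ η 0
      rw [countUpTo_zero, Nat.zero_add] at h01
      exact h01
    by_cases hPN : P = N
    · have hcast0 : (P : ZMod N) = 0 := by rw [hPN]; exact ZMod.natCast_self N
      by_cases hb : η ((1 : ℕ) : ZMod N) = true
      · have hposeq : pos η (k + 1) = 1 := by
          apply pos_eq η (k + 1) le_rfl (by omega)
          · rw [hrep1, hcount1, if_pos hb]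
          · intro x' h1' _; exact h1'
        have hcond : η ((P : ZMod N) + 1) = true := by
          rw [show (P : ZMod N) + 1 = ((1 : ℕ) : ZMod N) by rw [hcast0, hone]; ring]
          exact hb
        rw [hposeq]
        unfold nxt
        rw [hcond, if_pos rfl, hone, hcast0]
        ring
      · have hbf : η ((1 : ℕ) : ZMod N) = false := bool_false hb
        have h2occ : η ((2 : ℕ) : ZMod N) = true := by
          rcases hE ((1 : ℕ) : ZMod N) with h' | h'
          · rw [h'] at hbf; exact absurd hbf (by simp)
          · rwa [show ((1 : ℕ) : ZMod N) + 1 = ((2 : ℕ) : ZMod N) by push_cast; ring] at h'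
        have hposeq : pos η (k + 1) = 2 := by
          apply pos_eq η (k + 1) (by omega) (by omega)
          · rw [hrep1, show (2 : ℕ) = 1 + 1 by rfl, countUpTo_succ, hcount1, if_neg hb,
              if_pos (by rw [show (1 + 1 : ℕ) = 2 by rfl]; exact h2occ)]
          · intro x' h1' h2'
            rw [hrep1] at h2'
            by_contra hc
            have hx'1 : x' = 1 := by omega
            rw [hx'1, hcount1, if_neg hb] at h2'
            omega
        have hcond : η ((P : ZMod N) + 1) = false := by
          rw [show (P : ZMod N) + 1 = ((1 : ℕ) : ZMod N) by rw [hcast0, hone]; ring]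
          exact hbf
        rw [hposeq]
        unfold nxt
        rw [hcond]
        simp only [Bool.false_eq_true, if_false]
        rw [htwo, hcast0]
        ring
    · -- P < N, so P = N - 1 and the successor wraps to 1
      have hPltN : P < N := by omega
      have hb1f : η ((P + 1 : ℕ) : ZMod N) = false :=
        empty_above η hnum hPtop (by omega) (by omega)
      have hP1N : P + 1 = N := by
        by_contra hc
        have hb2f : η ((P + 2 : ℕ) : ZMod N) = false :=
          empty_above η hnum hPtop (by omega) (by omega)
        rcases hE ((P + 1 : ℕ) : ZMod N) with h' | h'
        · rw [h'] at hb1f; exact absurd hb1f (by simp)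
        · rw [show ((P + 1 : ℕ) : ZMod N) + 1 = ((P + 2 : ℕ) : ZMod N) by push_cast; ring]
            at h'
          rw [h'] at hb2f; exact absurd hb2f (by simp)
      have hcastP1 : ((P + 1 : ℕ) : ZMod N) = 0 := by rw [hP1N]; exact ZMod.natCast_self N
      have hb1 : η ((1 : ℕ) : ZMod N) = true := by
        rcases hE (0 : ZMod N) with h' | h'
        · rw [← hcastP1] at h'; rw [h'] at hb1f; exact absurd hb1f (by simp)
        · rwa [show (0 : ZMod N) + 1 = ((1 : ℕ) : ZMod N) by rw [hone]; ring] at h'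
      have hposeq : pos η (k + 1) = 1 := by
        apply pos_eq η (k + 1) le_rfl (by omega)
        · rw [hrep1, hcount1, if_pos hb1]
        · intro x' h1' _; exact h1'
      have hPm1 : (P : ZMod N) = -1 := by
        have h := hcastP1
        push_cast at h
        linear_combination h
      have hcond : η ((P : ZMod N) + 1) = false := by
        rw [show (P : ZMod N) + 1 = ((P + 1 : ℕ) : ZMod N) by push_cast; ring]
        exact hb1f
      rw [hposeq]
      unfold nxt
      rw [hcond]
      simp only [Bool.false_eq_true, if_false]
      rw [hone, hPm1]
      ring

end C4
section Dpart

open NormedSpace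
open scoped Nat

variable {m n : Type*} [Fintype m] [DecidableEq m] [Fintype n] [DecidableEq n]

lemma exp_intertwine (A : Matrix m m ℝ) (B : Matrix n n ℝ) (C : Matrix m n ℝ)
    (h : A * C = C * B) : exp A * C = C * exp B := by
  letI : SeminormedRing (Matrix m m ℝ) := Matrix.linftyOpSemiNormedRing
  letI : NormedRing (Matrix m m ℝ) := Matrix.linftyOpNormedRing
  letI : NormedAlgebra ℝ (Matrix m m ℝ) := Matrix.linftyOpNormedAlgebra
  letI : SeminormedRing (Matrix n n ℝ) := Matrix.linftyOpSemiNormedRing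
  letI : NormedRing (Matrix n n ℝ) := Matrix.linftyOpNormedRing
  letI : NormedAlgebra ℝ (Matrix n n ℝ) := Matrix.linftyOpNormedAlgebra
  have hpow : ∀ j : ℕ, A ^ j * C = C * B ^ j := by
    intro j
    induction j with
    | zero => simp
    | succ j ih =>
      rw [pow_succ, pow_succ, Matrix.mul_assoc, h, ← Matrix.mul_assoc, ih, Matrix.mul_assoc]
  let L : Matrix m m ℝ →ₗ[ℝ] Matrix m n ℝ :=
    { toFun := fun X => X * C
      map_add' := fun X Y => Matrix.add_mul X Y C
      map_smul' := fun r X => Matrix.smul_mul r X C }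
  let R : Matrix n n ℝ →ₗ[ℝ] Matrix m n ℝ :=
    { toFun := fun X => C * X
      map_add' := fun X Y => Matrix.mul_add C X Y
      map_smul' := fun r X => Matrix.mul_smul C r X }
  have hL : Continuous L := LinearMap.continuous_of_finiteDimensional L
  have hR : Continuous R := LinearMap.continuous_of_finiteDimensional R
  have hsA := NormedSpace.expSeries_summable' (𝕂 := ℝ) A
  have hsB := NormedSpace.expSeries_summable' (𝕂 := ℝ) B
  rw [NormedSpace.exp_eq_tsum (𝕂 := ℝ) (𝔸 := Matrix m m ℝ),
    NormedSpace.exp_eq_tsum (𝕂 := ℝ) (𝔸 := Matrix n n ℝ)]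
  have h1 : HasSum (fun j : ℕ => L ((j !⁻¹ : ℝ) • A ^ j))
      (L (∑' j : ℕ, (j !⁻¹ : ℝ) • A ^ j)) := hsA.hasSum.map L hL
  have h2 : HasSum (fun j : ℕ => R ((j !⁻¹ : ℝ) • B ^ j))
      (R (∑' j : ℕ, (j !⁻¹ : ℝ) • B ^ j)) := hsB.hasSum.map R hR
  have hfun : (fun j : ℕ => L ((j !⁻¹ : ℝ) • A ^ j))
      = fun j : ℕ => R ((j !⁻¹ : ℝ) • B ^ j) := by
    funext j
    show ((j !⁻¹ : ℝ) • A ^ j) * C = C * ((j !⁻¹ : ℝ) • B ^ j)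
    rw [Matrix.smul_mul, Matrix.mul_smul, hpow j]
  rw [hfun] at h1
  exact h1.unique h2

lemma exp_invariant (e : m ≃ m) (A : Matrix m m ℝ) (h : ∀ p q, A (e p) (e q) = A p q)
    (p q : m) : exp A (e p) (e q) = exp A p q := by
  letI : SeminormedRing (Matrix m m ℝ) := Matrix.linftyOpSemiNormedRing
  letI : NormedRing (Matrix m m ℝ) := Matrix.linftyOpNormedRing
  letI : NormedAlgebra ℝ (Matrix m m ℝ) := Matrix.linftyOpNormedAlgebra
  letI : NormedAlgebra ℚ (Matrix m m ℝ) := Matrix.linftyOpNormedAlgebra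
  have hsub : A.submatrix e e = A := by
    ext p' q'; exact h p' q'
  set f := Matrix.reindexAlgEquiv ℝ ℝ e.symm with hf
  have hc : Continuous (f : Matrix m m ℝ → Matrix m m ℝ) := by
    show Continuous fun M : Matrix m m ℝ => M.submatrix e e
    exact continuous_pi fun i => continuous_pi fun j =>
      (continuous_apply (e j)).comp (continuous_apply (e i))
  have hmap := map_exp f hc A
  have hfA : f A = A := by
    rw [hf, Matrix.reindexAlgEquiv_apply, Matrix.reindex_apply, Equiv.symm_symm, hsub]
  rw [hfA] at hmap
  have : (exp A).submatrix e e = exp A := by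
    have : f (exp A) = (exp A).submatrix e e := by
      rw [hf, Matrix.reindexAlgEquiv_apply, Matrix.reindex_apply, Equiv.symm_symm]
    rw [← this]
    exact hmap
  exact congrFun (congrFun this p) q

end Dpart
section Epart

variable {N K : ℕ} [NeZero N] [NeZero K]

/-- move the tag to the next particle -/
def thetaFun (p : TagT N K) : TagT N K :=
  ⟨(nxt p.1.2 p.1.1, p.1.2), ⟨p.2.1, nxt_occ p.2.1.2 p.1.1⟩⟩

lemma thetaFun_inj : Function.Injective (thetaFun (N := N) (K := K)) := by
  intro p q h
  have h2 : p.1.2 = q.1.2 := congrArg (fun r => r.1.2) h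
  have h1 : nxt p.1.2 p.1.1 = nxt q.1.2 q.1.1 := congrArg (fun r => r.1.1) h
  rw [h2] at h1
  have := nxt_inj (η := q.1.2) (h2 ▸ p.2.2) q.2.2 h1
  apply Subtype.ext
  exact Prod.ext this h2

def theta : TagT N K ≃ TagT N K :=
  Equiv.ofBijective _ (Finite.injective_iff_bijective.mp (thetaFun_inj (N := N) (K := K)))

lemma theta_apply (p : TagT N K) : (theta p).1 = (nxt p.1.2 p.1.1, p.1.2) := rfl

lemma tagCount_theta (hN : 3 ≤ N) (p q : TagT N K) :
    tagCount (theta p).1 (theta q).1 = tagCount p.1 q.1 := by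
  unfold tagCount
  congr 1
  apply Finset.filter_congr
  intro yz _
  set y := yz.1 with hy
  set z : ZMod N := if yz.2 then 1 else -1 with hzdef
  have hz : z = 1 ∨ z = -1 := by
    rw [hzdef]; cases yz.2 <;> simp
  rw [theta_apply, theta_apply]
  simp only []
  constructor
  · rintro ⟨c2, c1, c3, hq⟩
    refine ⟨c2, c1, c3, ?_⟩
    have hcomm := key_comm hN p.2.1.2 (x := p.1.1) (y := y) (z := z) hz p.2.2 c1 c2 c3
    have hq2 : q.1.2 = swapConf p.1.2 y (y + z) := congrArg Prod.snd hq
    have hq1 : nxt q.1.2 q.1.1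
        = (if y = nxt p.1.2 p.1.1 then nxt p.1.2 p.1.1 + z else nxt p.1.2 p.1.1) :=
      congrArg Prod.fst hq
    rw [← hcomm, ← hq2] at hq1
    have hocc' : q.1.2 (if y = p.1.1 then p.1.1 + z else p.1.1) = true := by
      rw [hq2]; exact key_occ p.2.2 c2 c3
    have := nxt_inj q.2.2 hocc' hq1
    exact Prod.ext this hq2
  · rintro ⟨c2, c1, c3, hq⟩
    refine ⟨c2, c1, c3, ?_⟩
    have hcomm := key_comm hN p.2.1.2 (x := p.1.1) (y := y) (z := z) hz p.2.2 c1 c2 c3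
    have hq2 : q.1.2 = swapConf p.1.2 y (y + z) := congrArg Prod.snd hq
    have hq1 : q.1.1 = (if y = p.1.1 then p.1.1 + z else p.1.1) := congrArg Prod.fst hq
    apply Prod.ext
    · show nxt q.1.2 q.1.1 = _
      rw [hq2, hq1, hcomm]
    · exact hq2

lemma genTag_theta (hN : 3 ≤ N) (p q : TagT N K) :
    genTag N K (theta p) (theta q) = genTag N K p q := by
  unfold genTag
  by_cases hpq : q = p
  · rw [if_pos (by rw [hpq]), if_pos hpq]
    congr 1
    rw [Finset.sum_filter, Finset.sum_filter,
      ← Equiv.sum_comp (theta (N := N) (K := K))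
        (fun r => if r ≠ theta p then (tagCount (theta p).1 r.1 : ℝ) else 0)]
    apply Finset.sum_congr rfl
    intro r _
    by_cases hr : r = p
    · rw [if_neg (by simp [hr]), if_neg (by simp [hr])]
    · rw [if_pos (by simp [theta.injective.ne_iff, hr]), if_pos (by simp [hr]),
        tagCount_theta hN]
  · rw [if_neg (by rw [theta.injective.eq_iff]; exact hpq), if_neg hpq]
    exact_mod_cast tagCount_theta hN p q

end Epart
section Eproj

variable {N K : ℕ} [NeZero N] [NeZero K]

lemma swap_ne {η : Conf N} {y w : ZMod N} (h2 : η y = true) (h3 : η w = false) :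
    swapConf η y w ≠ η := by
  intro h
  have := congrFun h y
  rw [swap_eval, if_pos rfl, h3] at this
  rw [← this] at h2
  exact absurd h2 (by simp)

lemma tagCount_self (p : TagT N K) : tagCount p.1 p.1 = 0 := by
  unfold tagCount
  rw [Finset.card_eq_zero, Finset.filter_eq_empty_iff]
  rintro yz _ ⟨c2, c1, c3, hq⟩
  have hq2 : p.1.2 = swapConf p.1.2 yz.1 (yz.1 + (if yz.2 then 1 else -1)) :=
    congrArg Prod.snd hq
  exact swap_ne c2 c3 hq2.symm

lemma jump_self (η : Conf N) : jumpCount η η = 0 := by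
  unfold jumpCount
  rw [Finset.card_eq_zero, Finset.filter_eq_empty_iff]
  rintro yz _ ⟨c1, c2, c3, hq⟩
  exact swap_ne c2 c3 hq

/-- the key fibrewise counting identity -/
lemma sum_tagCount (p : TagT N K) (σ : Conf N) (hσ : numParticles σ = K ∧ isErgodic σ) :
    ∑ q ∈ Finset.univ.filter (fun q : TagT N K => q.1.2 = σ), tagCount p.1 q.1
      = jumpCount p.1.2 σ := by
  unfold tagCount jumpCount
  simp_rw [Finset.card_filter]
  rw [Finset.sum_comm]
  apply Finset.sum_congr rfl
  intro yz _
  set y := yz.1 with hy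
  set z : ZMod N := if yz.2 then 1 else -1 with hzdef
  have hz : z = 1 ∨ z = -1 := by rw [hzdef]; cases yz.2 <;> simp
  set v : ZMod N × Conf N :=
    ((if y = p.1.1 then p.1.1 + z else p.1.1), swapConf p.1.2 y (y + z)) with hv
  by_cases hC : p.1.2 y = true ∧ p.1.2 (y - z) = true ∧ p.1.2 (y + z) = false
  · obtain ⟨c2, c1, c3⟩ := hC
    have hstep1 : ∑ q ∈ Finset.univ.filter (fun q : TagT N K => q.1.2 = σ),
        (if p.1.2 y = true ∧ p.1.2 (y - z) = true ∧ p.1.2 (y + z) = false ∧ q.1 = v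
          then 1 else 0)
        = ∑ q ∈ Finset.univ.filter (fun q : TagT N K => q.1.2 = σ),
          (if q.1 = v then 1 else 0) := by
      apply Finset.sum_congr rfl
      intro q _
      exact if_congr (by tauto) rfl rfl
    have hstep2 : (if p.1.2 (y - z) = true ∧ p.1.2 y = true ∧ p.1.2 (y + z) = false
        ∧ swapConf p.1.2 y (y + z) = σ then (1 : ℕ) else 0)
        = (if v.2 = σ then 1 else 0) := by
      apply if_congr _ rfl rfl
      constructor
      · rintro ⟨_, _, _, h⟩; exact h
      · intro h; exact ⟨c1, c2, c3, h⟩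
    rw [hstep1, hstep2]
    by_cases hvs : v.2 = σ
    · rw [if_pos hvs]
      have hvmem : (numParticles v.2 = K ∧ isErgodic v.2) ∧ v.2 v.1 = true := by
        constructor
        · rw [hvs]; exact hσ
        · exact key_occ p.2.2 c2 c3
      rw [Finset.sum_eq_single (⟨v, hvmem⟩ : TagT N K)]
      · rw [if_pos rfl]
      · intro q _ hq
        rw [if_neg]
        intro h
        exact hq (Subtype.ext h)
      · intro hmem
        exfalso
        apply hmem
        rw [Finset.mem_filter]
        exact ⟨Finset.mem_univ _, hvs⟩
    · rw [if_neg hvs]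
      apply Finset.sum_eq_zero
      intro q hq
      rw [Finset.mem_filter] at hq
      rw [if_neg]
      intro h
      exact hvs (by rw [← congrArg Prod.snd h]; exact hq.2)
  · rw [if_neg (show ¬(p.1.2 (y - z) = true ∧ p.1.2 y = true ∧ p.1.2 (y + z) = false
        ∧ swapConf p.1.2 y (y + z) = σ) from fun h => hC ⟨h.2.1, h.1, h.2.2.1⟩)]
    apply Finset.sum_eq_zero
    intro q _
    exact if_neg (fun h => hC ⟨h.1, h.2.1, h.2.2.1⟩)

lemma sum_tagCount_all (p : TagT N K) :
    ∑ r : TagT N K, tagCount p.1 r.1 = ∑ σ : ErgoT N K, jumpCount p.1.2 σ.1 := by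
  rw [← Finset.sum_fiberwise Finset.univ (fun r : TagT N K => (⟨r.1.2, r.2.1⟩ : ErgoT N K))
    (fun r => tagCount p.1 r.1)]
  apply Finset.sum_congr rfl
  intro σ _
  rw [← sum_tagCount p σ.1 σ.2]
  apply Finset.sum_congr
  · apply Finset.filter_congr
    intro r _
    rw [Subtype.ext_iff]
  · intros; rfl

end Eproj
section Einter

variable {N K : ℕ} [NeZero N] [NeZero K]

def proj (N K : ℕ) [NeZero N] : Matrix (TagT N K) (ErgoT N K) ℝ :=
  fun q σ => if q.1.2 = σ.1 then 1 else 0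

lemma intertwine_gen : genTag N K * proj N K = proj N K * genErgo N K := by
  ext p σ
  rw [Matrix.mul_apply, Matrix.mul_apply]
  have hR : ∑ σ' : ErgoT N K, proj N K p σ' * genErgo N K σ' σ
      = genErgo N K ⟨p.1.2, p.2.1⟩ σ := by
    rw [Finset.sum_eq_single (⟨p.1.2, p.2.1⟩ : ErgoT N K)]
    · show (if p.1.2 = p.1.2 then (1 : ℝ) else 0) * _ = _
      rw [if_pos rfl, one_mul]
    · intro σ' _ hne
      show (if p.1.2 = σ'.1 then (1 : ℝ) else 0) * _ = 0
      rw [if_neg fun h => hne (Subtype.ext h.symm), zero_mul]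
    · intro h; exact absurd (Finset.mem_univ _) h
  rw [hR]
  have hL : ∑ q : TagT N K, genTag N K p q * proj N K q σ
      = ∑ q ∈ Finset.univ.filter (fun q : TagT N K => q.1.2 = σ.1), genTag N K p q := by
    rw [Finset.sum_filter]
    apply Finset.sum_congr rfl
    intro q _
    show genTag N K p q * (if q.1.2 = σ.1 then (1:ℝ) else 0) = _
    by_cases h : q.1.2 = σ.1
    · rw [if_pos h, if_pos h, mul_one]
    · rw [if_neg h, if_neg h, mul_zero]
  rw [hL]
  by_cases hcfg : p.1.2 = σ.1
  · have hmem : p ∈ Finset.univ.filter (fun q : TagT N K => q.1.2 = σ.1) :=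
      Finset.mem_filter.mpr ⟨Finset.mem_univ _, hcfg⟩
    rw [← Finset.add_sum_erase _ _ hmem]
    have herase : ∑ q ∈ (Finset.univ.filter (fun q : TagT N K => q.1.2 = σ.1)).erase p,
        genTag N K p q = 0 := by
      have hnat : ∑ q ∈ (Finset.univ.filter (fun q : TagT N K => q.1.2 = σ.1)).erase p,
          tagCount p.1 q.1 = 0 := by
        have htot : ∑ q ∈ Finset.univ.filter (fun q : TagT N K => q.1.2 = σ.1),
            tagCount p.1 q.1 = 0 := by
          rw [sum_tagCount p σ.1 σ.2, ← hcfg]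
          exact jump_self _
        have hle : ∑ q ∈ (Finset.univ.filter (fun q : TagT N K => q.1.2 = σ.1)).erase p,
            tagCount p.1 q.1
            ≤ ∑ q ∈ Finset.univ.filter (fun q : TagT N K => q.1.2 = σ.1),
              tagCount p.1 q.1 :=
          Finset.sum_le_sum_of_subset
            (Finset.erase_subset p (Finset.univ.filter (fun q : TagT N K => q.1.2 = σ.1)))
        omega
      calc ∑ q ∈ (Finset.univ.filter (fun q : TagT N K => q.1.2 = σ.1)).erase p,
            genTag N K p q
          = ∑ q ∈ (Finset.univ.filter (fun q : TagT N K => q.1.2 = σ.1)).erase p,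
            (tagCount p.1 q.1 : ℝ) := by
            apply Finset.sum_congr rfl
            intro q hq
            exact if_neg (Finset.ne_of_mem_erase hq)
        _ = ((∑ q ∈ (Finset.univ.filter (fun q : TagT N K => q.1.2 = σ.1)).erase p,
            tagCount p.1 q.1 : ℕ) : ℝ) := by rw [Nat.cast_sum]
        _ = 0 := by rw [hnat, Nat.cast_zero]
    rw [herase, add_zero]
    have hσeq : σ = ⟨p.1.2, p.2.1⟩ := Subtype.ext hcfg.symm
    rw [hσeq]
    show genTag N K p p = genErgo N K ⟨p.1.2, p.2.1⟩ ⟨p.1.2, p.2.1⟩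
    unfold genTag genErgo
    rw [if_pos rfl, if_pos rfl]
    congr 1
    rw [Finset.filter_ne', Finset.filter_ne',
      Finset.sum_erase _ (by exact_mod_cast congrArg (Nat.cast (R := ℝ)) (tagCount_self p)),
      Finset.sum_erase _ (by
        show ((jumpCount p.1.2 (⟨p.1.2, p.2.1⟩ : ErgoT N K).1 : ℕ) : ℝ) = 0
        rw [jump_self, Nat.cast_zero])]
    rw [← Nat.cast_sum, ← Nat.cast_sum, sum_tagCount_all]
  · have hne : ∀ q ∈ Finset.univ.filter (fun q : TagT N K => q.1.2 = σ.1), q ≠ p := by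
      intro q hq h
      rw [Finset.mem_filter] at hq
      exact hcfg (h ▸ hq.2)
    calc ∑ q ∈ Finset.univ.filter (fun q : TagT N K => q.1.2 = σ.1), genTag N K p q
        = ∑ q ∈ Finset.univ.filter (fun q : TagT N K => q.1.2 = σ.1),
          (tagCount p.1 q.1 : ℝ) :=
          Finset.sum_congr rfl (fun q hq => if_neg (hne q hq))
      _ = ((jumpCount p.1.2 σ.1 : ℕ) : ℝ) := by rw [← Nat.cast_sum, sum_tagCount p σ.1 σ.2]
      _ = genErgo N K ⟨p.1.2, p.2.1⟩ σ := by
          unfold genErgo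
          rw [if_neg (fun h : σ = ⟨p.1.2, p.2.1⟩ => hcfg ((Subtype.ext_iff.mp h) ▸ rfl))]
    done

end Einter

/-- **Tagged particle with uniform rank.**  For `N ≥ 2`, `N/2 < K < N`, `η₀ ∈ ℰ_{N,K}` and
`t ≥ 0`: starting the tagged-particle FEP from `μ₀ = (1/K) Σ_k δ_{(x_k(η₀), η₀)}`, the mass
at time `t` of the state `(x_k(η), η)` equals `(1/K) (δ_{η₀} e^{tQ^ℰ})(η)`, for every
`k ∈ ℤ/Kℤ` and every `η ∈ ℰ_{N,K}`; in other words, the pushforward of `μ_t` under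
`(x,η) ↦ (r(x,η), η)` is `Unif(ℤ/Kℤ) ⊗ δ_{η₀} e^{tQ^ℰ}`. -/
theorem fep_tagged_uniform_rank
    (N K : ℕ) [NeZero N] [NeZero K] (hN : 2 ≤ N) (h1 : N < 2 * K) (h2 : K < N)
    (η₀ : Conf N) (hη₀ : numParticles η₀ = K ∧ isErgodic η₀) (t : ℝ) (ht : 0 ≤ t)
    (k : ZMod K) (η : Conf N) (hη : numParticles η = K ∧ isErgodic η)
    (hmem : ((((pos η k : ℕ) : ZMod N), η) : ZMod N × Conf N)
      ∈ {p : ZMod N × Conf N | (numParticles p.2 = K ∧ isErgodic p.2) ∧ p.2 p.1 = true}) :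
    Matrix.vecMul
        (fun p : TagT N K =>
          ∑ k' : ZMod K, (1 / (K : ℝ))
            * (if p.1 = ((((pos η₀ k' : ℕ) : ZMod N), η₀) : ZMod N × Conf N) then 1 else 0))
        (NormedSpace.exp (t • genTag N K))
        ⟨((((pos η k : ℕ) : ZMod N), η) : ZMod N × Conf N), hmem⟩
      = (1 / (K : ℝ)) * NormedSpace.exp (t • genErgo N K) ⟨η₀, hη₀⟩ ⟨η, hη⟩ := by
  have hN3 : 3 ≤ N := by omega
  have hK2 : 2 ≤ K := by omega
  have hKR : (K : ℝ) ≠ 0 := Nat.cast_ne_zero.mpr (by omega)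
  set G : Matrix (TagT N K) (TagT N K) ℝ := t • genTag N K with hG
  set E : Matrix (TagT N K) (TagT N K) ℝ := NormedSpace.exp G with hE
  set E' : Matrix (ErgoT N K) (ErgoT N K) ℝ := NormedSpace.exp (t • genErgo N K) with hE'
  set μ : TagT N K → ℝ := fun p : TagT N K =>
    ∑ k' : ZMod K, (1 / (K : ℝ))
      * (if p.1 = ((((pos η₀ k' : ℕ) : ZMod N), η₀) : ZMod N × Conf N) then 1 else 0) with hμ
  -- invariance of the generator and of exp under the rank shift
  have hGinv : ∀ p q : TagT N K, G (theta p) (theta q) = G p q := by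
    intro p q
    rw [hG, Matrix.smul_apply, Matrix.smul_apply, genTag_theta hN3]
  have hEinv : ∀ p q : TagT N K, E (theta p) (theta q) = E p q := by
    intro p q
    rw [hE]
    exact exp_invariant theta G hGinv p q
  have hvec : ∀ s : TagT N K, Matrix.vecMul μ E s = ∑ p : TagT N K, μ p * E p s :=
    fun s => rfl
  -- invariance of the initial distribution
  have hposnxt : ∀ k' : ZMod K,
      ((pos η₀ (k' + 1) : ℕ) : ZMod N) = nxt η₀ ((pos η₀ k' : ℕ) : ZMod N) :=
    fun k' => pos_nxt hN3 hK2 η₀ hη₀.1 hη₀.2 k'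
  have hkey : ∀ (p : TagT N K) (k' : ZMod K),
      ((theta p).1 = ((((pos η₀ (k' + 1) : ℕ) : ZMod N), η₀) : ZMod N × Conf N))
        ↔ (p.1 = ((((pos η₀ k' : ℕ) : ZMod N), η₀) : ZMod N × Conf N)) := by
    intro p k'
    rw [theta_apply]
    constructor
    · intro h
      have hsnd : p.1.2 = η₀ := congrArg Prod.snd h
      have hfst : nxt p.1.2 p.1.1 = ((pos η₀ (k' + 1) : ℕ) : ZMod N) := congrArg Prod.fst h
      rw [hsnd, hposnxt k'] at hfst
      have hocc1 : η₀ p.1.1 = true := by rw [← hsnd]; exact p.2.2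
      have := nxt_inj hocc1 (pos_occ η₀ k' hη₀.1) hfst
      exact Prod.ext this hsnd
    · intro h
      have hsnd : p.1.2 = η₀ := congrArg Prod.snd h
      have hfst : p.1.1 = ((pos η₀ k' : ℕ) : ZMod N) := congrArg Prod.fst h
      apply Prod.ext
      · show nxt p.1.2 p.1.1 = _
        rw [hsnd, hfst, hposnxt k']
      · exact hsnd
  have hμinv : ∀ p : TagT N K, μ (theta p) = μ p := by
    intro p
    have e := Equiv.sum_comp (Equiv.addRight (1 : ZMod K))
      (fun k' : ZMod K => (1 / (K : ℝ))
        * (if (theta p).1 = ((((pos η₀ k' : ℕ) : ZMod N), η₀) : ZMod N × Conf N)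
          then 1 else 0))
    simp only [hμ]
    rw [← e]
    apply Finset.sum_congr rfl
    intro k' _
    congr 1
    exact if_congr (hkey p k') rfl rfl
  have hfinv : ∀ s : TagT N K, Matrix.vecMul μ E (theta s) = Matrix.vecMul μ E s := by
    intro s
    rw [hvec, hvec,
      ← Equiv.sum_comp (theta (N := N) (K := K)) (fun p => μ p * E p (theta s))]
    apply Finset.sum_congr rfl
    intro p _
    rw [hμinv p, hEinv p s]
  -- the family of tagged states over the target configuration
  have hSmem : ∀ k' : ZMod K, ((((pos η k' : ℕ) : ZMod N), η) : ZMod N × Conf N)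
      ∈ {p : ZMod N × Conf N | (numParticles p.2 = K ∧ isErgodic p.2) ∧ p.2 p.1 = true} :=
    fun k' => ⟨hη, pos_occ η k' hη.1⟩
  set S : ZMod K → TagT N K := fun k' => ⟨_, hSmem k'⟩ with hS
  have hθS : ∀ k' : ZMod K, theta (S k') = S (k' + 1) := by
    intro k'
    apply Subtype.ext
    rw [theta_apply]
    show (nxt η ((pos η k' : ℕ) : ZMod N), η) = (((pos η (k' + 1) : ℕ) : ZMod N), η)
    rw [pos_nxt hN3 hK2 η hη.1 hη.2 k']
  have hconstNat : ∀ j : ℕ, Matrix.vecMul μ E (S (k + j)) = Matrix.vecMul μ E (S k) := by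
    intro j
    induction j with
    | zero => rw [Nat.cast_zero, add_zero]
    | succ j ih =>
      have hstep : S (k + ((j + 1 : ℕ) : ZMod K)) = theta (S (k + j)) := by
        rw [hθS]
        congr 1
        push_cast
        ring
      rw [hstep, hfinv, ih]
  have hconst : ∀ k' : ZMod K, Matrix.vecMul μ E (S k') = Matrix.vecMul μ E (S k) := by
    intro k'
    have hrepr : k' = k + (((k' - k).val : ℕ) : ZMod K) := by
      rw [ZMod.natCast_rightInverse (k' - k)]
      ring
    rw [hrepr]
    exact hconstNat _
  have hsum_fiber : ∑ k' : ZMod K, Matrix.vecMul μ E (S k')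
      = ∑ q ∈ Finset.univ.filter (fun q : TagT N K => q.1.2 = η), Matrix.vecMul μ E q := by
    apply Finset.sum_bij (i := fun (k' : ZMod K) _ => S k')
    · intro k' _
      exact Finset.mem_filter.mpr ⟨Finset.mem_univ _, rfl⟩
    · intro a _ b _ hab
      have : ((pos η a : ℕ) : ZMod N) = ((pos η b : ℕ) : ZMod N) :=
        congrArg (fun s : TagT N K => s.1.1) hab
      exact pos_cast_inj η hη.1 this
    · intro q hq
      rw [Finset.mem_filter] at hq
      have hocc : η q.1.1 = true := by rw [← hq.2]; exact q.2.2
      obtain ⟨k', hk'⟩ := pos_surj η hη.1 hocc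
      exact ⟨k', Finset.mem_univ _, Subtype.ext (Prod.ext hk' hq.2.symm)⟩
    · intro k' _; rfl
  have hcard : ∑ k' : ZMod K, Matrix.vecMul μ E (S k')
      = (K : ℝ) * Matrix.vecMul μ E (S k) := by
    rw [Finset.sum_congr rfl (fun k' _ => hconst k'), Finset.sum_const, Finset.card_univ,
      ZMod.card, nsmul_eq_mul]
  -- projection to the configuration process
  have htw : G * proj N K = proj N K * (t • genErgo N K) := by
    rw [hG, Matrix.smul_mul, Matrix.mul_smul, intertwine_gen]
  have hexp : E * proj N K = proj N K * E' := by
    rw [hE, hE']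
    exact exp_intertwine _ _ _ htw
  have hμproj : Matrix.vecMul μ (proj N K)
      = fun σ : ErgoT N K => if σ = ⟨η₀, hη₀⟩ then 1 else 0 := by
    funext σ
    show ∑ q : TagT N K, μ q * proj N K q σ = _
    simp only [hμ]
    simp_rw [Finset.sum_mul]
    rw [Finset.sum_comm]
    have hinner : ∀ k' : ZMod K,
        ∑ q : TagT N K, ((1 / (K : ℝ))
            * (if q.1 = ((((pos η₀ k' : ℕ) : ZMod N), η₀) : ZMod N × Conf N) then 1 else 0))
          * proj N K q σ
        = (1 / (K : ℝ)) * (if σ = ⟨η₀, hη₀⟩ then 1 else 0) := by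
      intro k'
      rw [Finset.sum_eq_single
        (⟨((((pos η₀ k' : ℕ) : ZMod N), η₀) : ZMod N × Conf N),
          ⟨hη₀, pos_occ η₀ k' hη₀.1⟩⟩ : TagT N K)]
      · rw [if_pos rfl, mul_one]
        show (1 / (K : ℝ)) * (if η₀ = σ.1 then (1:ℝ) else 0) = _
        congr 1
        apply if_congr _ rfl rfl
        rw [Subtype.ext_iff]
        exact eq_comm
      · intro q _ hq
        rw [if_neg (fun h => hq (Subtype.ext h)), mul_zero, zero_mul]
      · intro h; exact absurd (Finset.mem_univ _) h
    rw [Finset.sum_congr rfl (fun k' _ => hinner k'), Finset.sum_const, Finset.card_univ,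
      ZMod.card, nsmul_eq_mul, ← mul_assoc, mul_one_div_cancel hKR, one_mul]
  have hfiber_to_E' : ∑ q ∈ Finset.univ.filter (fun q : TagT N K => q.1.2 = η),
      Matrix.vecMul μ E q = E' ⟨η₀, hη₀⟩ ⟨η, hη⟩ := by
    have hstep : ∑ q ∈ Finset.univ.filter (fun q : TagT N K => q.1.2 = η),
        Matrix.vecMul μ E q
        = Matrix.vecMul (Matrix.vecMul μ E) (proj N K) ⟨η, hη⟩ := by
      show _ = ∑ q : TagT N K, Matrix.vecMul μ E q * proj N K q ⟨η, hη⟩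
      rw [Finset.sum_filter]
      apply Finset.sum_congr rfl
      intro q _
      show _ = Matrix.vecMul μ E q * (if q.1.2 = η then (1:ℝ) else 0)
      by_cases h : q.1.2 = η
      · rw [if_pos h, if_pos h, mul_one]
      · rw [if_neg h, if_neg h, mul_zero]
    rw [hstep, Matrix.vecMul_vecMul, hexp, ← Matrix.vecMul_vecMul, hμproj]
    show ∑ σ : ErgoT N K, (if σ = ⟨η₀, hη₀⟩ then (1:ℝ) else 0) * E' σ ⟨η, hη⟩ = _
    rw [Finset.sum_eq_single (⟨η₀, hη₀⟩ : ErgoT N K)]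
    · rw [if_pos rfl, one_mul]
    · intro σ' _ hne
      rw [if_neg hne, zero_mul]
    · intro h; exact absurd (Finset.mem_univ _) h
  have hSk : (⟨((((pos η k : ℕ) : ZMod N), η) : ZMod N × Conf N), hmem⟩ : TagT N K) = S k :=
    Subtype.ext rfl
  have hfinal : (K : ℝ) * Matrix.vecMul μ E (S k) = E' ⟨η₀, hη₀⟩ ⟨η, hη⟩ := by
    rw [← hcard, hsum_fiber, hfiber_to_E']
  rw [hSk, ← hfinal, one_div, inv_mul_cancel_left₀ hKR]

end
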